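/- For a finite poset Σ, the space S_Σ-Hom(I_Σ^{⊗n}, I_Σ) of S_Σ-bimodule maps factoring through I_Σ^{⊗_{S_Σ} n} is spanned by the maps μ_{(σ_0,…,σ_n)} indexed by n-chains of Σ, where μ_{(σ_0,…,σ_n)} sends the basis tensor (β_0,β_1)⊗(β'_1,β_2)⊗⋯⊗(β'_{n-1},β_n) to (σ_0,σ_n) if β_i=β'_i for all i and (β_0,…,β_n)=(σ_0,…,σ_n), and to 0 otherwise. -/

import Mathlib

open Finset

variable {K P : Type} [Field K] [Fintype P] [PartialOrder P] [DecidableEq P]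
  [DecidableRel ((· ≤ ·) : P → P → Prop)]

abbrev IncPair (P : Type) [PartialOrder P] := {p : P × P // p.1 ≤ p.2}

abbrev Inc (K P : Type) [PartialOrder P] := IncPair P → K

noncomputable def incMul (f g : Inc K P) : Inc K P := fun q =>
  ∑ b : P, if h : q.1.1 ≤ b ∧ b ≤ q.1.2
    then f ⟨(q.1.1, b), h.1⟩ * g ⟨(b, q.1.2), h.2⟩ else 0

def incBasis (σ τ : P) : Inc K P := fun q => if q.1 = (σ, τ) then 1 else 0

def incOne : Inc K P := fun q => if q.1.1 = q.1.2 then 1 else 0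

def Chain (P : Type) [PartialOrder P] (n : ℕ) := {f : Fin (n+1) → P // Monotone f}

noncomputable instance (n : ℕ) : Fintype (Chain P n) :=
  Fintype.ofInjective (fun c : Chain P n => c.1) Subtype.val_injective

def face {n : ℕ} (i : Fin (n+2)) (c : Chain P (n+1)) : Chain P n :=
  ⟨c.1 ∘ i.succAbove, c.2.comp (Fin.strictMono_succAbove i).monotone⟩

def degen {n : ℕ} (i : Fin (n+1)) (c : Chain P n) : Chain P (n+1) :=
  ⟨c.1 ∘ i.predAbove, c.2.comp (Fin.predAbove_right_monotone i)⟩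

open scoped TensorProduct

abbrev TP (K P : Type) [Field K] [PartialOrder P] (n : ℕ) :=
  PiTensorProduct K (fun _ : Fin n => Inc K P)

noncomputable def relators (K P : Type) [Field K] [Fintype P] [PartialOrder P] [DecidableEq P]
    [DecidableRel ((· ≤ ·) : P → P → Prop)] (n : ℕ) :
    Submodule K (TP K P n) :=
  Submodule.span K { t | ∃ (v : Fin n → Inc K P) (j j' : Fin n) (σ : P),
    (j:ℕ) + 1 = (j':ℕ) ∧
    t = PiTensorProduct.tprod K (Function.update v j (incMul (v j) (incBasis σ σ)))
      - PiTensorProduct.tprod K (Function.update v j' (incMul (incBasis σ σ) (v j'))) }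

abbrev Q (K P : Type) [Field K] [Fintype P] [PartialOrder P] [DecidableEq P]
    [DecidableRel ((· ≤ ·) : P → P → Prop)] (n : ℕ) :=
  TP K P n ⧸ relators K P n

noncomputable def chainVec {n : ℕ} (c : Chain P n) : Fin n → Inc K P :=
  fun i => incBasis (c.1 i.castSucc) (c.1 i.succ)

noncomputable def chainT {n : ℕ} (c : Chain P n) : TP K P n :=
  PiTensorProduct.tprod K (chainVec c)

noncomputable def chainQ {n : ℕ} (c : Chain P n) : Q K P n :=
  Submodule.Quotient.mk (chainT c)

noncomputable def muM {n : ℕ} (c : Chain P n) :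
    MultilinearMap K (fun _ : Fin n => Inc K P) (Inc K P) :=
  (MultilinearMap.mkPiRing K (Fin n) (incBasis (c.1 0) (c.1 (Fin.last n)))).compLinearMap
    (fun i => LinearMap.proj ⟨(c.1 i.castSucc, c.1 i.succ), c.2 (Fin.castSucc_lt_succ : i.castSucc < i.succ).le⟩)

noncomputable def muL {n : ℕ} (c : Chain P n) : TP K P n →ₗ[K] Inc K P :=
  PiTensorProduct.lift (muM c)

noncomputable def iota {n : ℕ} (f : Chain P n → K) : TP K P n →ₗ[K] Inc K P :=
  ∑ c : Chain P n, f c • muL c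

/-- The property of being a morphism of `S_Σ`-bimodules `I_Σ^{⊗ n} → I_Σ` that factors through
the relative tensor power `I_Σ^{⊗_{S_Σ} n}`: it kills the relators, and it is equivariant for the
left and right `S_Σ`-actions (multiplication by the diagonal idempotents on the first,
resp. last, tensor factor). -/
def IsBM {n : ℕ} (g : TP K P (n+1) →ₗ[K] Inc K P) : Prop :=
  relators K P (n+1) ≤ LinearMap.ker g ∧
  (∀ (v : Fin (n+1) → Inc K P) (σ : P),
    g (PiTensorProduct.tprod K (Function.update v 0 (incMul (incBasis σ σ) (v 0)))) =
      incMul (incBasis σ σ) (g (PiTensorProduct.tprod K v))) ∧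
  (∀ (v : Fin (n+1) → Inc K P) (σ : P),
    g (PiTensorProduct.tprod K
        (Function.update v (Fin.last n) (incMul (v (Fin.last n)) (incBasis σ σ)))) =
      incMul (g (PiTensorProduct.tprod K v)) (incBasis σ σ))

lemma incMul_diag_left (σ : P) (f : Inc K P) (q : IncPair P) :
    incMul (incBasis σ σ) f q = if q.1.1 = σ then f q else 0 := by
  obtain ⟨⟨a, b⟩, hab⟩ := q
  simp only [incMul, incBasis]
  by_cases h : a = σ
  · subst h
    rw [if_pos rfl, Finset.sum_eq_single a]
    · rw [dif_pos ⟨le_rfl, hab⟩, if_pos rfl, one_mul]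
    · intro b' _ hb'
      split_ifs with h1 h2
      · exact absurd (congrArg Prod.snd h2) hb'
      · exact zero_mul _
      · rfl
    · simp
  · rw [if_neg h, Finset.sum_eq_zero]
    intro b' _
    split_ifs with h1 h2
    · exact absurd (congrArg Prod.fst h2) h
    · exact zero_mul _
    · rfl

lemma incMul_diag_right (σ : P) (f : Inc K P) (q : IncPair P) :
    incMul f (incBasis σ σ) q = if q.1.2 = σ then f q else 0 := by
  obtain ⟨⟨a, b⟩, hab⟩ := q
  simp only [incMul, incBasis]
  by_cases h : b = σ
  · subst h
    rw [if_pos rfl, Finset.sum_eq_single b]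
    · rw [dif_pos ⟨hab, le_rfl⟩, if_pos rfl, mul_one]
    · intro b' _ hb'
      split_ifs with h1 h2
      · exact absurd (congrArg Prod.fst h2) hb'
      · exact mul_zero _
      · rfl
    · simp
  · rw [if_neg h, Finset.sum_eq_zero]
    intro b' _
    split_ifs with h1 h2
    · exact absurd (congrArg Prod.snd h2) h
    · exact mul_zero _
    · rfl

lemma incMul_basis_left_eq (a b : P) : incMul (incBasis a a) (incBasis a b) = (incBasis a b : Inc K P) := by
  funext q
  rw [incMul_diag_left]
  obtain ⟨⟨x, y⟩, hxy⟩ := q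
  simp only [incBasis]
  split_ifs with h1 h2 h2 <;> first | rfl | (exfalso; exact h1 (congrArg Prod.fst h2))

lemma incMul_basis_left_ne {σ a : P} (h : a ≠ σ) (b : P) :
    incMul (incBasis σ σ) (incBasis a b) = (0 : Inc K P) := by
  funext q
  rw [incMul_diag_left]
  obtain ⟨⟨x, y⟩, hxy⟩ := q
  simp only [incBasis]
  split_ifs with h1 h2
  · exact absurd ((congrArg Prod.fst h2).symm.trans h1) h
  · rfl
  · rfl

lemma incMul_basis_right_eq (a b : P) : incMul (incBasis a b) (incBasis b b) = (incBasis a b : Inc K P) := by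
  funext q
  rw [incMul_diag_right]
  obtain ⟨⟨x, y⟩, hxy⟩ := q
  simp only [incBasis]
  split_ifs with h1 h2 h2 <;> first | rfl | (exfalso; exact h1 (congrArg Prod.snd h2))

lemma muL_tprod {n : ℕ} (c : Chain P n) (v : Fin n → Inc K P) :
    muL (K := K) c (PiTensorProduct.tprod K v) =
      (∏ i : Fin n, v i ⟨(c.1 i.castSucc, c.1 i.succ), c.2 (Fin.castSucc_lt_succ : i.castSucc < i.succ).le⟩) •
        incBasis (c.1 0) (c.1 (Fin.last n)) := by
  simp [muL, muM, MultilinearMap.mkPiRing]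

/-- The key pair associated to index `i` of a chain. -/

noncomputable abbrev cpair {n : ℕ} (c : Chain P n) (i : Fin n) : IncPair P :=
  ⟨(c.1 i.castSucc, c.1 i.succ), c.2 (Fin.castSucc_lt_succ : i.castSucc < i.succ).le⟩

lemma prod_update_apply {n : ℕ} (c : Chain P n) (v : Fin n → Inc K P) (j : Fin n) (w : Inc K P) :
    (∏ i : Fin n, (Function.update v j w) i (cpair c i)) =
      w (cpair c j) * ∏ i ∈ Finset.univ.erase j, v i (cpair c i) := by
  rw [← Finset.mul_prod_erase _ _ (Finset.mem_univ j), Function.update_self]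
  congr 1
  exact Finset.prod_congr rfl fun i hi =>
    congrFun (Function.update_of_ne (Finset.ne_of_mem_erase hi) _ _) _

lemma prod_self_apply {n : ℕ} (c : Chain P n) (v : Fin n → Inc K P) (j : Fin n) :
    (∏ i : Fin n, v i (cpair c i)) =
      v j (cpair c j) * ∏ i ∈ Finset.univ.erase j, v i (cpair c i) :=
  (Finset.mul_prod_erase _ _ (Finset.mem_univ j)).symm

lemma isBM_muL {n : ℕ} (c : Chain P (n+1)) : IsBM (muL (K := K) c) := by
  refine ⟨?_, ?_, ?_⟩
  · rw [relators]
    rw [Submodule.span_le]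
    rintro t ⟨v, j, j', σ, hjj, rfl⟩
    simp only [SetLike.mem_coe, LinearMap.mem_ker, map_sub, muL_tprod, sub_eq_zero]
    have hsucc : j.succ = j'.castSucc := Fin.ext (by simpa using hjj)
    have hcc : c.1 j.succ = c.1 j'.castSucc := congrArg c.1 hsucc
    rw [prod_update_apply, prod_update_apply]
    congr 1
    have h1 : (incMul (v j) (incBasis σ σ)) (cpair c j)
        = if c.1 j.succ = σ then v j (cpair c j) else 0 :=
      incMul_diag_right σ (v j) (cpair c j)
    have h2 : (incMul (incBasis σ σ) (v j')) (cpair c j')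
        = if c.1 j'.castSucc = σ then v j' (cpair c j') else 0 :=
      incMul_diag_left σ (v j') (cpair c j')
    rw [h1, h2, ← hcc]
    by_cases h : c.1 j.succ = σ
    · rw [if_pos h, if_pos h, ← prod_self_apply c v j, ← prod_self_apply c v j']
    · rw [if_neg h, if_neg h, zero_mul, zero_mul]
  · intro v σ
    rw [muL_tprod, muL_tprod, prod_update_apply]
    have h1 : (incMul (incBasis σ σ) (v 0)) (cpair c 0)
        = if c.1 (0 : Fin (n+2)) = σ then v 0 (cpair c 0) else 0 :=
      incMul_diag_left σ (v 0) (cpair c 0)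
    rw [h1]
    funext q
    rw [show (incMul (incBasis σ σ)
        ((∏ i : Fin (n+1), v i (cpair c i)) • incBasis (K := K) (c.1 0) (c.1 (Fin.last (n+1))))) q
      = if q.1.1 = σ
          then ((∏ i : Fin (n+1), v i (cpair c i)) •
            incBasis (K := K) (c.1 0) (c.1 (Fin.last (n+1)))) q else 0
      from incMul_diag_left σ _ q]
    simp only [Pi.smul_apply, smul_eq_mul]
    by_cases hq : q.1 = (c.1 0, c.1 (Fin.last (n+1)))
    · have hq1 : q.1.1 = c.1 0 := congrArg Prod.fst hq
      rw [hq1]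
      by_cases h : c.1 (0 : Fin (n+2)) = σ
      · rw [if_pos h, if_pos h, ← prod_self_apply c v 0]
      · rw [if_neg h, if_neg h, zero_mul, zero_mul]
    · have hB : incBasis (K := K) (c.1 0) (c.1 (Fin.last (n+1))) q = 0 := if_neg hq
      simp [hB]
  · intro v σ
    rw [muL_tprod, muL_tprod, prod_update_apply]
    have h1 : (incMul (v (Fin.last n)) (incBasis σ σ)) (cpair c (Fin.last n))
        = if c.1 (Fin.last (n+1)) = σ then v (Fin.last n) (cpair c (Fin.last n)) else 0 :=
      incMul_diag_right σ (v (Fin.last n)) (cpair c (Fin.last n))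
    rw [h1]
    funext q
    rw [show (incMul
        ((∏ i : Fin (n+1), v i (cpair c i)) • incBasis (K := K) (c.1 0) (c.1 (Fin.last (n+1))))
        (incBasis σ σ)) q
      = if q.1.2 = σ
          then ((∏ i : Fin (n+1), v i (cpair c i)) •
            incBasis (K := K) (c.1 0) (c.1 (Fin.last (n+1)))) q else 0
      from incMul_diag_right σ _ q]
    simp only [Pi.smul_apply, smul_eq_mul]
    by_cases hq : q.1 = (c.1 0, c.1 (Fin.last (n+1)))
    · have hq2 : q.1.2 = c.1 (Fin.last (n+1)) := congrArg Prod.snd hq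
      rw [hq2]
      by_cases h : c.1 (Fin.last (n+1)) = σ
      · rw [if_pos h, if_pos h, ← prod_self_apply c v (Fin.last n)]
      · rw [if_neg h, if_neg h, zero_mul, zero_mul]
    · have hB : incBasis (K := K) (c.1 0) (c.1 (Fin.last (n+1))) q = 0 := if_neg hq
      simp [hB]

lemma incMul_left_add (σ : P) (f g : Inc K P) :
    incMul (incBasis σ σ) (f + g) = incMul (incBasis σ σ) f + incMul (incBasis σ σ) g := by
  funext q
  simp only [Pi.add_apply, incMul_diag_left]
  split_ifs <;> simp

lemma incMul_left_smul (σ : P) (a : K) (f : Inc K P) :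
    incMul (incBasis σ σ) (a • f) = a • incMul (incBasis σ σ) f := by
  funext q
  simp only [Pi.smul_apply, incMul_diag_left, smul_eq_mul]
  split_ifs <;> simp

lemma incMul_right_add (σ : P) (f g : Inc K P) :
    incMul (f + g) (incBasis σ σ) = incMul f (incBasis σ σ) + incMul g (incBasis σ σ) := by
  funext q
  simp only [Pi.add_apply, incMul_diag_right]
  split_ifs <;> simp

lemma incMul_right_smul (σ : P) (a : K) (f : Inc K P) :
    incMul (a • f) (incBasis σ σ) = a • incMul f (incBasis σ σ) := by
  funext q
  simp only [Pi.smul_apply, incMul_diag_right, smul_eq_mul]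
  split_ifs <;> simp

noncomputable def BM (n : ℕ) : Submodule K (TP K P (n+1) →ₗ[K] Inc K P) where
  carrier := {g | IsBM g}
  add_mem' := by
    rintro g₁ g₂ ⟨k1, l1, r1⟩ ⟨k2, l2, r2⟩
    refine ⟨fun x hx => ?_, fun v σ => ?_, fun v σ => ?_⟩
    · have h1 := k1 hx; have h2 := k2 hx
      simp only [LinearMap.mem_ker] at h1 h2 ⊢
      simp [h1, h2]
    · simp only [LinearMap.add_apply, l1 v σ, l2 v σ, incMul_left_add]
    · simp only [LinearMap.add_apply, r1 v σ, r2 v σ, incMul_right_add]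
  zero_mem' := by
    refine ⟨fun x hx => ?_, fun v σ => ?_, fun v σ => ?_⟩
    · simp [LinearMap.mem_ker]
    · simp only [LinearMap.zero_apply]
      funext q; rw [incMul_diag_left]; simp
    · simp only [LinearMap.zero_apply]
      funext q; rw [incMul_diag_right]; simp
  smul_mem' := by
    rintro a g ⟨k, l, r⟩
    refine ⟨fun x hx => ?_, fun v σ => ?_, fun v σ => ?_⟩
    · have h1 := k hx
      simp only [LinearMap.mem_ker] at h1 ⊢
      simp [h1]
    · simp only [LinearMap.smul_apply, l v σ, incMul_left_smul]
    · simp only [LinearMap.smul_apply, r v σ, incMul_right_smul]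

lemma g_chainT {n : ℕ} {g : TP K P (n+1) →ₗ[K] Inc K P} (hg : IsBM g) (c : Chain P (n+1)) :
    g (chainT c) = (g (chainT c) ⟨(c.1 0, c.1 (Fin.last (n+1))), c.2 (Fin.zero_le _)⟩) •
      incBasis (c.1 0) (c.1 (Fin.last (n+1))) := by
  have e1 : incMul (incBasis (c.1 0) (c.1 0)) (chainVec (K := K) c 0) = chainVec c 0 :=
    incMul_basis_left_eq _ _
  have e2 : incMul (chainVec (K := K) c (Fin.last n))
      (incBasis (c.1 (Fin.last (n+1))) (c.1 (Fin.last (n+1)))) = chainVec c (Fin.last n) :=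
    incMul_basis_right_eq _ _
  have hL := hg.2.1 (chainVec c) (c.1 0)
  rw [e1, Function.update_eq_self] at hL
  have hR := hg.2.2 (chainVec c) (c.1 (Fin.last (n+1)))
  rw [e2, Function.update_eq_self] at hR
  funext q
  by_cases hq : q.1 = (c.1 0, c.1 (Fin.last (n+1)))
  · have hqq : q = ⟨(c.1 0, c.1 (Fin.last (n+1))), c.2 (Fin.zero_le _)⟩ := Subtype.ext hq
    rw [hqq]
    simp [incBasis]
  · have hcases : q.1.1 ≠ c.1 0 ∨ q.1.2 ≠ c.1 (Fin.last (n+1)) := by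
      by_contra hcon
      push_neg at hcon
      exact hq (Prod.ext hcon.1 hcon.2)
    have hB : incBasis (K := K) (c.1 0) (c.1 (Fin.last (n+1))) q = 0 := if_neg hq
    rw [Pi.smul_apply, hB, smul_zero]
    show g ((PiTensorProduct.tprod K) (chainVec c)) q = 0
    rcases hcases with h | h
    · have := congrFun hL.symm q
      rw [incMul_diag_left, if_neg h] at this
      exact this.symm
    · have := congrFun hR.symm q
      rw [incMul_diag_right, if_neg h] at this
      exact this.symm

lemma basisFun_eq_incBasis (p : IncPair P) :
    (Pi.basisFun K (IncPair P)) p = incBasis p.1.1 p.1.2 := by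
  funext q
  rw [Pi.basisFun_apply, Pi.single_apply]
  simp only [incBasis]
  by_cases h : q = p
  · subst h; simp
  · rw [if_neg h, if_neg]
    intro hh
    exact h (Subtype.ext (hh.trans Prod.mk.eta))

lemma g_nonchain {n : ℕ} {g : TP K P (n+1) →ₗ[K] Inc K P} (hg : IsBM g)
    (a b : Fin (n+1) → P) (hab : ∀ i, a i ≤ b i) (j j' : Fin (n+1))
    (hjj : (j:ℕ) + 1 = (j':ℕ)) (hne : a j' ≠ b j) :
    g (PiTensorProduct.tprod K (fun i => incBasis (a i) (b i))) = 0 := by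
  set v : Fin (n+1) → Inc K P := fun i => incBasis (a i) (b i) with hv
  have hmem : (PiTensorProduct.tprod K (Function.update v j (incMul (v j) (incBasis (b j) (b j))))
      - PiTensorProduct.tprod K (Function.update v j' (incMul (incBasis (b j) (b j)) (v j'))))
      ∈ relators K P (n+1) :=
    Submodule.subset_span ⟨v, j, j', b j, hjj, rfl⟩
  have h0 := hg.1 hmem
  rw [LinearMap.mem_ker, map_sub, sub_eq_zero] at h0
  have e1 : incMul (v j) (incBasis (b j) (b j)) = v j := incMul_basis_right_eq _ _
  have e2 : incMul (incBasis (b j) (b j)) (v j') = (0 : Inc K P) := incMul_basis_left_ne hne _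
  rw [e1, Function.update_eq_self, e2] at h0
  rw [h0, MultilinearMap.map_update_zero, map_zero]

noncomputable def cfun {n : ℕ} (p : Fin (n+1) → IncPair P) : Fin (n+2) → P :=
  fun k => if h : (k:ℕ) < n+1 then (p ⟨k, h⟩).1.1 else (p (Fin.last n)).1.2

lemma cfun_castSucc {n : ℕ} (p : Fin (n+1) → IncPair P) (i : Fin (n+1)) :
    cfun p i.castSucc = (p i).1.1 := by
  simp only [cfun]
  rw [dif_pos (by simpa using i.isLt)]
  exact congrArg (fun j => (p j).1.1) (Fin.ext rfl)

lemma cfun_succ {n : ℕ} (p : Fin (n+1) → IncPair P)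
    (hch : ∀ i : Fin n, (p i.castSucc).1.2 = (p i.succ).1.1) (i : Fin (n+1)) :
    cfun p i.succ = (p i).1.2 := by
  simp only [cfun]
  by_cases h : ((i.succ : Fin (n+2)) : ℕ) < n+1
  · rw [dif_pos h]
    have hi : (i:ℕ) < n := by simpa using h
    have hc := hch ⟨(i:ℕ), hi⟩
    have h1 : (⟨(i:ℕ), hi⟩ : Fin n).castSucc = i := Fin.ext rfl
    have h2 : (⟨(i:ℕ), hi⟩ : Fin n).succ = (⟨((i.succ : Fin (n+2)) : ℕ), h⟩ : Fin (n+1)) :=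
      Fin.ext rfl
    rw [h1, h2] at hc
    exact hc.symm
  · rw [dif_neg h]
    have hin : (i:ℕ) = n := by
      have := i.isLt
      simp only [Fin.val_succ] at h
      omega
    rw [show i = Fin.last n from Fin.ext (by simpa using hin)]

noncomputable def chainOf {n : ℕ} (p : Fin (n+1) → IncPair P)
    (hch : ∀ i : Fin n, (p i.castSucc).1.2 = (p i.succ).1.1) : Chain P (n+1) :=
  ⟨cfun p, Fin.monotone_iff_le_succ.mpr fun i => by
    rw [cfun_castSucc, cfun_succ p hch]; exact (p i).2⟩

lemma chain_unique {n : ℕ} (p : Fin (n+1) → IncPair P)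
    (hch : ∀ i : Fin n, (p i.castSucc).1.2 = (p i.succ).1.1) (c : Chain P (n+1))
    (h : ∀ i : Fin (n+1), c.1 i.castSucc = (p i).1.1 ∧ c.1 i.succ = (p i).1.2) :
    c = chainOf p hch := by
  apply Subtype.ext
  funext k
  refine Fin.lastCases ?_ (fun j => ?_) k
  · show c.1 (Fin.last (n+1)) = cfun p (Fin.last (n+1))
    rw [show Fin.last (n+1) = (Fin.last n).succ from rfl, (h (Fin.last n)).2,
      cfun_succ p hch]
  · show c.1 j.castSucc = cfun p j.castSucc
    rw [(h j).1, cfun_castSucc]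

/-- The space `S_Σ-Hom(I_Σ^{⊗n}, I_Σ)` of `S_Σ`-bimodule maps factoring
through `I_Σ^{⊗_{S_Σ} n}` is exactly the linear span of the maps `μ_{(σ₀,…,σ_n)}` indexed by
the `n`-chains of `Σ`, where `μ_{(σ₀,…,σ_n)}` sends the basis tensor of an `n`-chain to
`(σ₀,σ_n)` if the chain is `(σ₀,…,σ_n)` and to `0` otherwise. -/
theorem relative_hom_spanned_by_mu (n : ℕ) :
    (Submodule.span K (Set.range (fun c : Chain P (n+1) => muL (K := K) c)) :
        Set (TP K P (n+1) →ₗ[K] Inc K P)) =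
      {g | IsBM g} := by
  apply Set.Subset.antisymm
  · intro g hg
    have hsub : Set.range (fun c : Chain P (n+1) => muL (K := K) c) ⊆ (SetLike.coe (BM (K := K) (P := P) n)) := by
      rintro _ ⟨c, rfl⟩
      exact isBM_muL c
    exact Submodule.span_le.mpr hsub hg
  · intro g hg
    replace hg : IsBM g := hg
    have key : g = ∑ c : Chain P (n+1),
        (g (chainT c) ⟨(c.1 0, c.1 (Fin.last (n+1))), c.2 (Fin.zero_le _)⟩) • muL c := by
      apply PiTensorProduct.ext
      apply Module.Basis.ext_multilinear (fun _ => Pi.basisFun K (IncPair P))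
      intro p
      simp only [LinearMap.compMultilinearMap_apply, basisFun_eq_incBasis,
        LinearMap.sum_apply, LinearMap.smul_apply, muL_tprod]
      by_cases hch : ∀ i : Fin n, (p i.castSucc).1.2 = (p i.succ).1.1
      · set c := chainOf p hch with hcdef
        have hfc : ∀ i, c.1 i.castSucc = (p i).1.1 := cfun_castSucc p
        have hfs : ∀ i, c.1 i.succ = (p i).1.2 := cfun_succ p hch
        have hw : (fun i => incBasis (K := K) ((p i).1.1) ((p i).1.2)) = chainVec c := by
          funext i
          show incBasis ((p i).1.1) ((p i).1.2) = incBasis (c.1 i.castSucc) (c.1 i.succ)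
          rw [hfc i, hfs i]
        have hgl : g (PiTensorProduct.tprod K
            (fun i => incBasis (K := K) ((p i).1.1) ((p i).1.2))) = g (chainT c) := by
          rw [hw]; rfl
        rw [hgl, Finset.sum_eq_single c]
        · have hprod : (∏ i : Fin (n+1),
              incBasis (K := K) ((p i).1.1) ((p i).1.2) (cpair c i)) = 1 := by
            apply Finset.prod_eq_one
            intro i _
            show (if ((c.1 i.castSucc, c.1 i.succ) : P × P) = ((p i).1.1, (p i).1.2)
              then (1:K) else 0) = 1
            rw [if_pos (Prod.ext (hfc i) (hfs i))]
          rw [hprod, one_smul]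
          exact g_chainT hg c
        · intro c' _ hne
          have hex : ∃ i : Fin (n+1),
              ((c'.1 i.castSucc, c'.1 i.succ) : P × P) ≠ ((p i).1.1, (p i).1.2) := by
            by_contra hcon
            push_neg at hcon
            exact hne (chain_unique p hch c' fun i =>
              ⟨congrArg Prod.fst (hcon i), congrArg Prod.snd (hcon i)⟩)
          obtain ⟨i, hi⟩ := hex
          have hz : incBasis (K := K) ((p i).1.1) ((p i).1.2) (cpair c' i) = 0 := if_neg hi
          rw [Finset.prod_eq_zero (Finset.mem_univ i) hz, zero_smul, smul_zero]
        · simp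
      · push_neg at hch
        obtain ⟨i, hi⟩ := hch
        rw [g_nonchain hg (fun k => (p k).1.1) (fun k => (p k).1.2) (fun k => (p k).2)
          i.castSucc i.succ (by simp) (Ne.symm hi)]
        symm
        apply Finset.sum_eq_zero
        intro c _
        by_cases hm : ((c.1 (i.castSucc).castSucc, c.1 (i.castSucc).succ) : P × P)
            = ((p i.castSucc).1.1, (p i.castSucc).1.2)
        · have hz : incBasis (K := K) ((p i.succ).1.1) ((p i.succ).1.2) (cpair c i.succ) = 0 := by
            rw [show incBasis (K := K) ((p i.succ).1.1) ((p i.succ).1.2) (cpair c i.succ)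
              = (if ((c.1 (i.succ).castSucc, c.1 (i.succ).succ) : P × P)
                  = ((p i.succ).1.1, (p i.succ).1.2) then (1:K) else 0) from rfl, if_neg]
            intro hh
            have h1 : c.1 (i.succ).castSucc = (p i.succ).1.1 := congrArg Prod.fst hh
            have h2 : c.1 (i.castSucc).succ = (p i.castSucc).1.2 := congrArg Prod.snd hm
            exact hi (h2.symm.trans h1)
          rw [Finset.prod_eq_zero (Finset.mem_univ i.succ) hz, zero_smul, smul_zero]
        · have hz : incBasis (K := K) ((p i.castSucc).1.1) ((p i.castSucc).1.2)
              (cpair c i.castSucc) = 0 := if_neg hm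
          rw [Finset.prod_eq_zero (Finset.mem_univ i.castSucc) hz, zero_smul, smul_zero]
    rw [key]
    exact Submodule.sum_mem _ fun c _ =>
      Submodule.smul_mem _ _ (Submodule.subset_span ⟨c, rfl⟩)
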